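/- (Corollary 1, equilibrium characterization in the consensus limit.) Suppose x = (ω̂, V̂, η, φ'') is an equilibrium of the closed-loop dynamics, i.e., A x + (M P^m, 0, 0, 0) = 0 for a load vector P^m ∈ ℝ^n, and suppose in addition that Sᵀ ω̂ = 0 (the condition obtained in the limit ‖(K^ω)^{−1}K^V‖_∞ → 0). Then: (i) ω̂ = 0 (zero frequency deviations); (ii) η = k₂·1_n for some k₂ ∈ ℝ, and the generated power vector P^gen := −K^droop ω̂ − K^V (K^ω)^{−1} K^{droop,I} η satisfies F^P P^gen = −k₂·1_n where (F^P)^{−1} = K^V (K^ω)^{−1} K^{droop,I}, together with the power balance Σᵢ P^gen_i = −Σᵢ P^m_i (so P^gen satisfies the KKT condition of the generation-cost minimization); (iii) 1_nᵀ K^V V̂ = 0 (so V̂ satisfies the KKT condition of the voltage-cost minimization with F^V = K^V). -/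
import Mathlib


open Matrix Filter

/-- Index type for the state `(ω̂, V̂, η, φ'')` of dimension `3n + (n-1)`. -/
abbrev Idx (n : ℕ) := (Fin n ⊕ Fin n) ⊕ (Fin n ⊕ Fin (n - 1))

/-- A connected-graph Laplacian: symmetric positive semidefinite, `L 1 = 0`,
and the kernel is exactly the span of the all-ones vector. -/
def IsConnLaplacian {n : ℕ} (L : Matrix (Fin n) (Fin n) ℝ) : Prop :=
  L.PosSemidef ∧ L *ᵥ (fun _ => (1 : ℝ)) = 0 ∧
    ∀ v : Fin n → ℝ, L *ᵥ v = 0 → ∃ c : ℝ, v = fun _ => c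

/-- The closed-loop system matrix `A` of the reduced dynamics
`(ω̂, V̂, η, φ'')`. -/
noncomputable def closedLoopA {n : ℕ}
    (M E Kw KV Kd KdI LR Leta Lphi : Matrix (Fin n) (Fin n) ℝ)
    (S : Matrix (Fin n) (Fin (n - 1)) ℝ) (Vnom γ : ℝ) :
    Matrix (Idx n) (Idx n) ℝ :=
  Matrix.fromBlocks
    (Matrix.fromBlocks
      (-(M * (Kd + Kw))) (M * KV)
      ((1 / Vnom) • (E * Kw)) (-(E * (LR + (1 / Vnom) • KV))))
    (Matrix.fromBlocks
      (-(M * (KV * Kw⁻¹ * KdI))) (-(M * (Lphi * S)))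
      0 ((1 / Vnom) • (E * (Lphi * S))))
    (Matrix.fromBlocks
      KdI 0
      (Sᵀ * KV⁻¹ * Kw) 0)
    (Matrix.fromBlocks
      (-Leta) 0
      0 (-(γ • (1 : Matrix (Fin (n - 1)) (Fin (n - 1)) ℝ))))


/-- Kernel of `Sᵀ` is the span of the all-ones vector. -/
lemma St_ker {n : ℕ} (hn : 2 ≤ n) (S : Matrix (Fin n) (Fin (n-1)) ℝ)
    (hS : Sᵀ * S = 1) (hS1 : Sᵀ *ᵥ (fun _ => (1:ℝ)) = 0)
    (v : Fin n → ℝ) (hv : Sᵀ *ᵥ v = 0) : ∃ c : ℝ, v = fun _ => c := by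
  have hn0 : (0:ℝ) < (n:ℝ) := by positivity
  set u : ℝ := (Real.sqrt n)⁻¹ with hu
  have hu2 : u * u = (n:ℝ)⁻¹ := by
    rw [hu, ← mul_inv, Real.mul_self_sqrt (by positivity)]
  set Q : Matrix (Fin n) (Fin (n-1) ⊕ Fin 1) ℝ :=
    Matrix.of (fun i j => Sum.elim (fun k => S i k) (fun _ => u) j) with hQ
  have hQtQ : Qᵀ * Q = 1 := by
    ext a b
    rcases a with a | a <;> rcases b with b | b
    · have := congrFun (congrFun hS a) b
      simpa [hQ, Matrix.mul_apply, Matrix.one_apply] using this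
    · have := congrFun hS1 a
      simp only [mulVec, dotProduct, transpose_apply, mul_one] at this
      simp [hQ, Matrix.mul_apply, Matrix.one_apply, ← Finset.sum_mul, this]
    · have := congrFun hS1 b
      simp only [mulVec, dotProduct, transpose_apply, mul_one] at this
      simp [hQ, Matrix.mul_apply, Matrix.one_apply, ← Finset.mul_sum, this]
    · simp [hQ, Matrix.mul_apply, Matrix.one_apply, hu2, Fin.ext_iff,
        Finset.sum_const, Fin.isValue]
      exact mul_inv_cancel₀ (ne_of_gt hn0)
  have e : Fin n ≃ Fin (n-1) ⊕ Fin 1 :=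
    (finCongr (by omega : n = (n-1) + 1)).trans finSumFinEquiv.symm
  have hQQt : Q * Qᵀ = 1 := (Matrix.mul_eq_one_comm_of_equiv e).mpr hQtQ
  refine ⟨u * u * ∑ j, v j, funext fun i => ?_⟩
  have h1 : ((Q * Qᵀ) *ᵥ v) i = v i := by rw [hQQt, one_mulVec]
  rw [← h1, ← mulVec_mulVec]
  have h2 : Qᵀ *ᵥ v = Sum.elim (0 : Fin (n-1) → ℝ) (fun _ => u * ∑ j, v j) := by
    ext (a | a)
    · have := congrFun hv a
      simpa [hQ, mulVec, dotProduct] using this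
    · simp [hQ, mulVec, dotProduct, Finset.mul_sum]
  rw [h2]
  simp [hQ, mulVec, dotProduct, Fintype.sum_sum_type]
  ring

/-- Sum of the entries of `L *ᵥ w` vanishes for a connected Laplacian. -/
lemma lap_sum {n : ℕ} {L : Matrix (Fin n) (Fin n) ℝ}
    (hL : IsConnLaplacian L) (w : Fin n → ℝ) : ∑ i, (L *ᵥ w) i = 0 := by
  obtain ⟨hpsd, h1, -⟩ := hL
  have hs : ∀ i j, L i j = L j i := fun i j => (hpsd.1.apply i j).symm
  calc ∑ i, (L *ᵥ w) i = ∑ i, ∑ j, L i j * w j := rfl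
    _ = ∑ j, ∑ i, L i j * w j := Finset.sum_comm
    _ = ∑ j, (L *ᵥ (fun _ => (1:ℝ))) j * w j := by
        refine Finset.sum_congr rfl fun j _ => ?_
        simp only [mulVec, dotProduct, mul_one, Finset.sum_mul]
        exact Finset.sum_congr rfl fun i _ => by rw [hs i j]
    _ = 0 := by rw [h1]; simp

/-- Corollary 1 (equilibrium characterization in the consensus limit):
at an equilibrium of the closed-loop dynamics with `Sᵀ ω̂ = 0`, the frequency
deviations vanish, `η = k₂ 1ₙ`, the generated power
`P^gen = −K^droop ω̂ − K^V (K^ω)⁻¹ K^{droop,I} η` satisfies the KKT condition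
`F^P P^gen = −k₂ 1ₙ` with power balance `∑ P^gen = −∑ P^m`, and
`1ₙᵀ K^V V̂ = 0`. -/
theorem stmt_17 {n : ℕ} (hn : 2 ≤ n)
    (m c kw kv kd kdi : Fin n → ℝ)
    (hm : ∀ i, 0 < m i) (hc : ∀ i, 0 < c i) (hkw : ∀ i, 0 < kw i)
    (hkv : ∀ i, 0 < kv i) (hkd : ∀ i, 0 < kd i) (hkdi : ∀ i, 0 < kdi i)
    (E : Matrix (Fin n) (Fin n) ℝ) (hE : E = (Matrix.diagonal c)⁻¹)
    (LR Leta Lphi : Matrix (Fin n) (Fin n) ℝ)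
    (hLR : IsConnLaplacian LR) (hLeta : IsConnLaplacian Leta)
    (hLphi : IsConnLaplacian Lphi)
    (S : Matrix (Fin n) (Fin (n - 1)) ℝ)
    (hS : Sᵀ * S = 1) (hS1 : Sᵀ *ᵥ (fun _ => (1 : ℝ)) = 0)
    (Vnom γ : ℝ) (hVnom : 0 < Vnom) (hγ : 0 < γ)
    (A : Matrix (Idx n) (Idx n) ℝ)
    (hA : A = closedLoopA (Matrix.diagonal m) E
      (Matrix.diagonal kw) (Matrix.diagonal kv) (Matrix.diagonal kd)
      (Matrix.diagonal kdi) LR Leta Lphi S Vnom γ)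
    -- the diagonal generation-cost matrix `F^P`, with `(F^P)⁻¹ = K^V (K^ω)⁻¹ K^{droop,I}`
    (FP : Matrix (Fin n) (Fin n) ℝ)
    (hFP : FP * (Matrix.diagonal kv * (Matrix.diagonal kw)⁻¹ *
      Matrix.diagonal kdi) = 1)
    -- `x = (ω̂, V̂, η, φ'')` is an equilibrium for the load vector `P^m`
    (Pm : Fin n → ℝ) (x : Idx n → ℝ)
    (hx : A *ᵥ x + (Sum.elim (Sum.elim ((Matrix.diagonal m) *ᵥ Pm) 0)
      (Sum.elim 0 0) : Idx n → ℝ) = 0)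
    -- the consensus-limit condition `Sᵀ ω̂ = 0`
    (hlim : Sᵀ *ᵥ (fun i => x (Sum.inl (Sum.inl i))) = 0) :
    -- (i) zero frequency deviations
    (∀ i, x (Sum.inl (Sum.inl i)) = 0) ∧
    -- (ii) `η = k₂ 1ₙ`, KKT condition and power balance for `P^gen`
    (∃ k₂ : ℝ, (∀ i, x (Sum.inr (Sum.inl i)) = k₂) ∧
      (FP *ᵥ
        (-((Matrix.diagonal kd) *ᵥ (fun i => x (Sum.inl (Sum.inl i)))) -
          ((Matrix.diagonal kv * (Matrix.diagonal kw)⁻¹ *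
            Matrix.diagonal kdi) *ᵥ (fun i => x (Sum.inr (Sum.inl i)))))
        = fun _ => -k₂) ∧
      (∑ i, (-((Matrix.diagonal kd) *ᵥ (fun i => x (Sum.inl (Sum.inl i)))) -
          ((Matrix.diagonal kv * (Matrix.diagonal kw)⁻¹ *
            Matrix.diagonal kdi) *ᵥ (fun i => x (Sum.inr (Sum.inl i))))) i
        = -∑ i, Pm i)) ∧
    -- (iii) `1ₙᵀ K^V V̂ = 0`
    (∑ i, kv i * x (Sum.inl (Sum.inr i)) = 0) := by
  -- names for the four state blocks
  set ω : Fin n → ℝ := fun i => x (Sum.inl (Sum.inl i)) with hωdef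
  set V : Fin n → ℝ := fun i => x (Sum.inl (Sum.inr i)) with hVdef
  set η : Fin n → ℝ := fun i => x (Sum.inr (Sum.inl i)) with hηdef
  set φ : Fin (n-1) → ℝ := fun i => x (Sum.inr (Sum.inr i)) with hφdef
  have hxe : x = Sum.elim (Sum.elim ω V) (Sum.elim η φ) := by
    funext j; rcases j with (i|i)|(i|i) <;> rfl
  rw [hA, closedLoopA, hxe, fromBlocks_mulVec, fromBlocks_mulVec,
    fromBlocks_mulVec] at hx
  -- the diagonal matrix D = K^V (K^ω)⁻¹ K^{droop,I}
  have hKwinv : (Matrix.diagonal kw)⁻¹ = Matrix.diagonal (fun i => (kw i)⁻¹) := by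
    refine Matrix.inv_eq_right_inv ?_
    rw [Matrix.diagonal_mul_diagonal,
      show (fun i => kw i * (kw i)⁻¹) = fun _ => (1:ℝ) from
        funext fun i => mul_inv_cancel₀ (hkw i).ne']
    exact Matrix.diagonal_one
  have hD : Matrix.diagonal kv * (Matrix.diagonal kw)⁻¹ * Matrix.diagonal kdi
      = Matrix.diagonal (fun i => kv i * (kw i)⁻¹ * kdi i) := by
    rw [hKwinv, Matrix.diagonal_mul_diagonal, Matrix.diagonal_mul_diagonal]
  have hEdiag : E = Matrix.diagonal (fun i => (c i)⁻¹) := by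
    rw [hE]
    refine Matrix.inv_eq_right_inv ?_
    rw [Matrix.diagonal_mul_diagonal,
      show (fun i => c i * (c i)⁻¹) = fun _ => (1:ℝ) from
        funext fun i => mul_inv_cancel₀ (hc i).ne']
    exact Matrix.diagonal_one
  -- row 3: K^{droop,I} ω − L_η η = 0
  have h3 : ∀ i, kdi i * ω i = (Leta *ᵥ η) i := by
    intro i
    have := congrFun hx (Sum.inr (Sum.inl i))
    simp only [Sum.elim_comp_inl, Sum.elim_comp_inr, Pi.add_apply,
      Sum.elim_inl, Sum.elim_inr, Pi.zero_apply, fromBlocks_mulVec,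
      Matrix.zero_mulVec, Matrix.neg_mulVec, Pi.neg_apply,
      Matrix.mulVec_diagonal] at this
    linarith
  -- ω is constant (consensus limit)
  obtain ⟨a, hωa⟩ := St_ker hn S hS hS1 ω hlim
  -- summing row 3 kills a
  have ha : a = 0 := by
    have hsum : ∑ i, kdi i * ω i = 0 := by
      rw [show (fun i => kdi i * ω i) = fun i => (Leta *ᵥ η) i from
        funext h3]
      exact lap_sum hLeta η
    rw [hωa] at hsum
    simp only [← Finset.sum_mul] at hsum
    have hpos : 0 < ∑ i, kdi i :=
      Finset.sum_pos (fun i _ => hkdi i) (by simp [Finset.univ_nonempty_iff]; exact Fin.pos_iff_nonempty.mp (by omega))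
    rcases mul_eq_zero.mp hsum with h | h
    · exact absurd h hpos.ne'
    · exact h
  have hω0 : ∀ i, ω i = 0 := fun i => by rw [hωa]; simp [ha]
  have hωzero : ω = 0 := funext fun i => hω0 i
  -- η is constant
  have hLη0 : Leta *ᵥ η = 0 := by
    funext i
    rw [← h3 i, hω0 i, mul_zero]; rfl
  obtain ⟨k₂, hηk⟩ := hLeta.2.2 η hLη0
  -- row 4: φ = 0
  have hφ0 : φ = 0 := by
    funext i
    have := congrFun hx (Sum.inr (Sum.inr i))
    simp only [Sum.elim_comp_inl, Sum.elim_comp_inr, Pi.add_apply,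
      Sum.elim_inl, Sum.elim_inr, Pi.zero_apply, fromBlocks_mulVec,
      Matrix.zero_mulVec, Matrix.neg_mulVec, Pi.neg_apply, hωzero,
      ← Matrix.mulVec_mulVec, Matrix.mulVec_zero] at this
    have hγφ : (γ • (1 : Matrix (Fin (n-1)) (Fin (n-1)) ℝ)) *ᵥ φ = γ • φ := by
      rw [Matrix.smul_mulVec, Matrix.one_mulVec]
    rw [hγφ] at this
    have : γ * φ i = 0 := by
      simpa using this
    have := (mul_eq_zero.mp this).resolve_left hγ.ne'
    simpa using this
  -- row 2: (L_R + (1/Vnom) K^V) V = 0, then sum gives ∑ kv V = 0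
  have h2 : ∀ i, (LR *ᵥ V) i + (1/Vnom) * (kv i * V i) = 0 := by
    intro i
    have := congrFun hx (Sum.inl (Sum.inr i))
    simp only [Sum.elim_comp_inl, Sum.elim_comp_inr, Pi.add_apply,
      Sum.elim_inl, Sum.elim_inr, Pi.zero_apply,
      Matrix.zero_mulVec, Matrix.neg_mulVec, Pi.neg_apply, hωzero, hφ0,
      ← Matrix.mulVec_mulVec, Matrix.mulVec_zero, Matrix.smul_mulVec,
      Pi.smul_apply, smul_eq_mul, hEdiag, Matrix.mulVec_diagonal,
      Matrix.add_mulVec ] at this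
    simp only [zero_add, add_zero, neg_eq_zero, mul_eq_zero, inv_eq_zero] at this
    exact this.resolve_left (hc i).ne'
  have hVsum : ∑ i, kv i * V i = 0 := by
    have hsumLR : ∑ i, (LR *ᵥ V) i = 0 := lap_sum hLR V
    have hsum : ∑ i, ((LR *ᵥ V) i + (1/Vnom) * (kv i * V i)) = 0 := by
      simp only [h2, Finset.sum_const_zero]
    rw [Finset.sum_add_distrib, hsumLR, zero_add, ← Finset.mul_sum] at hsum
    exact (mul_eq_zero.mp hsum).resolve_left (by positivity)
  -- row 1
  have h1 : ∀ i, kv i * V i = (kv i * (kw i)⁻¹ * kdi i) * η i - Pm i := by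
    intro i
    have := congrFun hx (Sum.inl (Sum.inl i))
    simp only [Sum.elim_comp_inl, Sum.elim_comp_inr, Pi.add_apply,
      Sum.elim_inl, Sum.elim_inr, Pi.zero_apply,
      Matrix.zero_mulVec, Matrix.neg_mulVec, Pi.neg_apply, hωzero, hφ0, hD,
      ← Matrix.mulVec_mulVec, Matrix.mulVec_zero,
      Matrix.mulVec_diagonal ] at this
    have hfac : m i * (kv i * V i - kv i * (kw i)⁻¹ * kdi i * η i + Pm i) = 0 := by
      linear_combination this
    have := (mul_eq_zero.mp hfac).resolve_left (hm i).ne'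
    linarith
  -- assemble the conclusions
  have hkdω : Matrix.diagonal kd *ᵥ ω = 0 := by rw [hωzero, Matrix.mulVec_zero]
  refine ⟨hω0, ⟨k₂, fun i => congrFun hηk i, ?_, ?_⟩, hVsum⟩
  · rw [hkdω, neg_zero, zero_sub, Matrix.mulVec_neg, Matrix.mulVec_mulVec,
      hFP, Matrix.one_mulVec, hηk]
    funext i
    simp
  · have hbal : ∀ i, -(kd i * ω i) - (kv i * (kw i)⁻¹ * kdi i) * η i
        = -(kv i * V i) - Pm i := by
      intro i
      have := h1 i
      rw [hω0 i]
      ring_nf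
      linarith
    calc ∑ i, (-(Matrix.diagonal kd *ᵥ ω) -
          ((Matrix.diagonal kv * (Matrix.diagonal kw)⁻¹ * Matrix.diagonal kdi) *ᵥ η)) i
        = ∑ i, (-(kv i * V i) - Pm i) := by
          refine Finset.sum_congr rfl fun i _ => ?_
          rw [← hbal i]
          simp [hD, Matrix.mulVec_diagonal]
      _ = -(∑ i, kv i * V i) - ∑ i, Pm i := by
          rw [Finset.sum_sub_distrib, Finset.sum_neg_distrib]
      _ = -∑ i, Pm i := by rw [hVsum]; ring
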